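/- Let U ⊆ ℝ³ be open with coordinates (ν₁,ν₂,ν₃) and let V: U → S²(ℝ³) be a C¹ divergence-free symmetric-matrix-valued map. Then for all p, q ∈ {1,2,3}, writing (p,p′,p″) and (q,q′,q″) for the cyclic orderings of (1,2,3) starting at p and at q respectively, one has on U: ∂(adj V)_{p″ q}/∂ν_{p′} − ∂(adj V)_{p′ q}/∂ν_{p″} = ∑_{a=1}^{3} ( (∂V_{q′ p}/∂ν_a) · V_{q″ a} − (∂V_{q″ p}/∂ν_a) · V_{q′ a} ), where adj V denotes the adjugate (classical adjoint) matrix of V. -/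

import Mathlib

/-- The partial derivative of `f : ℝ³ → ℝ` in the `i`-th coordinate direction. -/
noncomputable def pderiv3 (f : (Fin 3 → ℝ) → ℝ) (i : Fin 3) : (Fin 3 → ℝ) → ℝ :=
  fun x => fderiv ℝ f x (Pi.single i 1)

private lemma adj3 (A : Matrix (Fin 3) (Fin 3) ℝ) (i j : Fin 3) :
    A.adjugate i j =
      A (j+1) (i+1) * A (j+2) (i+2) - A (j+1) (i+2) * A (j+2) (i+1) := by
  rw [Matrix.adjugate_fin_three]
  fin_cases i <;> fin_cases j <;> simp [Matrix.cons_val_zero, Matrix.cons_val_one] <;> ring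

private lemma pderiv3_sub {f g : (Fin 3 → ℝ) → ℝ} {x : Fin 3 → ℝ}
    (hf : DifferentiableAt ℝ f x) (hg : DifferentiableAt ℝ g x) (i : Fin 3) :
    pderiv3 (fun y => f y - g y) i x = pderiv3 f i x - pderiv3 g i x := by
  simp [pderiv3, fderiv_fun_sub hf hg]

private lemma pderiv3_mul {f g : (Fin 3 → ℝ) → ℝ} {x : Fin 3 → ℝ}
    (hf : DifferentiableAt ℝ f x) (hg : DifferentiableAt ℝ g x) (i : Fin 3) :
    pderiv3 (fun y => f y * g y) i x = pderiv3 f i x * g x + f x * pderiv3 g i x := by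
  simp [pderiv3, fderiv_fun_mul hf hg]
  ring

private lemma sum3 (p : Fin 3) (g : Fin 3 → ℝ) : ∑ i, g i = g p + g (p+1) + g (p+2) := by
  fin_cases p <;> simp [Fin.sum_univ_three] <;> ring

/-- For a `C¹` divergence-free symmetric-matrix-valued map `V` on an open `U ⊆ ℝ³` and any
`p, q`, with `(p, p′, p″)` and `(q, q′, q″)` the cyclic orderings of `(1,2,3)` starting at
`p` resp. `q`, one has
`∂(adj V)_{p″q}/∂ν_{p′} − ∂(adj V)_{p′q}/∂ν_{p″}
  = ∑_a (∂V_{q′p}/∂ν_a) V_{q″a} − (∂V_{q″p}/∂ν_a) V_{q′a}` on `U`. -/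
theorem adjugate_curl_eq
    (U : Set (Fin 3 → ℝ)) (hU : IsOpen U)
    (V : (Fin 3 → ℝ) → Matrix (Fin 3) (Fin 3) ℝ)
    (hV : ∀ a b : Fin 3, ContDiffOn ℝ 1 (fun y => V y a b) U)
    (hsymm : ∀ x ∈ U, (V x).IsSymm)
    (hdiv : ∀ x ∈ U, ∀ j : Fin 3, ∑ i : Fin 3, pderiv3 (fun y => V y i j) i x = 0) :
    ∀ x ∈ U, ∀ p q : Fin 3,
      pderiv3 (fun y => (V y).adjugate (p + 2) q) (p + 1) x -
        pderiv3 (fun y => (V y).adjugate (p + 1) q) (p + 2) x =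
      ∑ a : Fin 3,
        (pderiv3 (fun y => V y (q + 1) p) a x * V x (q + 2) a -
          pderiv3 (fun y => V y (q + 2) p) a x * V x (q + 1) a) := by
  intro x hx p q
  have hmem : U ∈ nhds x := hU.mem_nhds hx
  have hd : ∀ a b : Fin 3, DifferentiableAt ℝ (fun y => V y a b) x := fun a b =>
    ((hV a b).differentiableOn one_ne_zero).differentiableAt hmem
  have hDsym : ∀ a b i : Fin 3,
      pderiv3 (fun y => V y a b) i x = pderiv3 (fun y => V y b a) i x := by
    intro a b i
    have h : (fun y => V y a b) =ᶠ[nhds x] (fun y => V y b a) := by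
      filter_upwards [hmem] with y hy
      exact ((hsymm y hy).apply a b).symm
    simp [pderiv3, h.fderiv_eq]
  have hadj : ∀ i j : Fin 3, (fun y => (V y).adjugate i j) =
      fun y => V y (j+1) (i+1) * V y (j+2) (i+2) - V y (j+1) (i+2) * V y (j+2) (i+1) :=
    fun i j => funext fun y => adj3 (V y) i j
  have i1 : p + 2 + 1 = p := by fin_cases p <;> rfl
  have i2 : p + 2 + 2 = p + 1 := by fin_cases p <;> rfl
  have i3 : p + 1 + 1 = p + 2 := by fin_cases p <;> rfl
  have i4 : p + 1 + 2 = p := by fin_cases p <;> rfl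
  rw [hadj, hadj]
  simp only [i1, i2, i3, i4]
  rw [pderiv3_sub ((hd _ _).fun_mul (hd _ _)) ((hd _ _).fun_mul (hd _ _)),
      pderiv3_sub ((hd _ _).fun_mul (hd _ _)) ((hd _ _).fun_mul (hd _ _)),
      pderiv3_mul (hd _ _) (hd _ _), pderiv3_mul (hd _ _) (hd _ _),
      pderiv3_mul (hd _ _) (hd _ _), pderiv3_mul (hd _ _) (hd _ _),
      sum3 p]
  have hdiv1 := hdiv x hx (q+1)
  have hdiv2 := hdiv x hx (q+2)
  rw [sum3 p] at hdiv1 hdiv2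
  rw [hDsym p (q+1) p, hDsym (p+1) (q+1) (p+1), hDsym (p+2) (q+1) (p+2)] at hdiv1
  rw [hDsym p (q+2) p, hDsym (p+1) (q+2) (p+1), hDsym (p+2) (q+2) (p+2)] at hdiv2
  linear_combination (V x (q+1) p) * hdiv2 - (V x (q+2) p) * hdiv1
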